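/- Let d, m ≥ 1 be integers, let π be a non-crossing ε_d-partition of [2dm], and let σ be a non-crossing partition of [2dm] with σ ≤ π. Then σ is an ε_d-partition if and only if σ is even (every block of σ has even cardinality). -/

import Mathlib

open Finset

/-- Two elements lie in the same block of the partition `P`. -/
def SameBlock {N : ℕ} (P : Finpartition (univ : Finset (Fin N))) (s t : Fin N) : Prop :=
  ∃ B ∈ P.parts, s ∈ B ∧ t ∈ B

/-- A partition of `[N]` is non-crossing if there are no `s₁ < t₁ < s₂ < t₂` with
`s₁ ∼ s₂`, `t₁ ∼ t₂` but `s₁ ≁ t₁`. -/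
def NonCrossing {N : ℕ} (P : Finpartition (univ : Finset (Fin N))) : Prop :=
  ∀ s₁ t₁ s₂ t₂ : Fin N, s₁ < t₁ → t₁ < s₂ → s₂ < t₂ →
    SameBlock P s₁ s₂ → SameBlock P t₁ t₂ → SameBlock P s₁ t₁

/-- Every block has even cardinality. -/
def EvenPartition {N : ℕ} (P : Finpartition (univ : Finset (Fin N))) : Prop :=
  ∀ B ∈ P.parts, Even B.card

/-- The (two-valued) function `ε` alternates along each block of `P`, listed in
increasing order. -/
def Alternating {N : ℕ} (ε : Fin N → Bool) (P : Finpartition (univ : Finset (Fin N))) : Prop :=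
  ∀ B ∈ P.parts, (Finset.sort B (· ≤ ·)).Chain' (fun a b => ε a ≠ ε b)

/-- An `ε`-partition: an even partition on each block of which `ε` alternates. -/
def EpsPartition {N : ℕ} (ε : Fin N → Bool) (P : Finpartition (univ : Finset (Fin N))) : Prop :=
  EvenPartition P ∧ Alternating ε P

/-- A pairing: every block has exactly two elements. -/
def IsPairing {N : ℕ} (P : Finpartition (univ : Finset (Fin N))) : Prop :=
  ∀ B ∈ P.parts, B.card = 2

/-- `σ` refines `π`: every block of `σ` is contained in a block of `π` (i.e. `σ ≤ π`). -/
def Refines {N : ℕ} (σ π : Finpartition (univ : Finset (Fin N))) : Prop :=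
  ∀ B ∈ σ.parts, ∃ C ∈ π.parts, B ⊆ C

/-- The pattern `ε_d = (1^d ∗^d)^m` on `[2dm]` (0-based; `true` codes `1`, `false` codes `∗`). -/
def epsd (d m : ℕ) : Fin (2*d*m) → Bool := fun j => decide ((j : ℕ) / d % 2 = 0)

/-- `ker I ≥ π` : the function `I` is constant on every block of `π`. -/
def KerGe {N : ℕ} {Λ : Type*} (π : Finpartition (univ : Finset (Fin N))) (I : Fin N → Λ) : Prop :=
  ∀ B ∈ π.parts, ∀ s ∈ B, ∀ t ∈ B, I s = I t

/-- The position `(j-1)d + l` in `[2dm]`, splitting `[2dm]` into `2m` consecutive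
segments of length `d`. -/
def seg (d m : ℕ) (j : Fin (2*m)) (l : Fin d) : Fin (2*d*m) :=
  ⟨j.1 * d + l.1, by
    have hj : j.1 + 1 ≤ 2*m := j.2
    have hl : l.1 < d := l.2
    calc j.1 * d + l.1 < j.1 * d + d := by linarith
      _ = (j.1 + 1) * d := by ring
      _ ≤ (2*m) * d := Nat.mul_le_mul hj (Nat.le_refl d)
      _ = 2*d*m := by ring⟩


section Aux

lemma alt_parity {α : Type*} (ε : α → Bool) (l : List α)
    (h : l.Chain' (fun a b => ε a ≠ ε b)) :
    ∀ k (hk : k < l.length), ε (l.get ⟨k, hk⟩) =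
      xor (decide (k % 2 = 1)) (ε (l.get ⟨0, Nat.lt_of_le_of_lt (Nat.zero_le _) hk⟩)) := by
  intro k
  induction k with
  | zero => intro hk; simp
  | succ n ih =>
    intro hk
    have hn : n < l.length := Nat.lt_of_succ_lt hk
    have hne : ε (l.get ⟨n, hn⟩) ≠ ε (l.get ⟨n + 1, hk⟩) :=
      List.isChain_iff_getElem.mp h n (by omega)
    have hflip : ε (l.get ⟨n + 1, hk⟩) = ! ε (l.get ⟨n, hn⟩) := by
      cases h1 : ε (l.get ⟨n+1, hk⟩) <;> cases h2 : ε (l.get ⟨n, hn⟩) <;> simp_all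
    rw [hflip, ih hn]
    rcases Nat.mod_two_eq_zero_or_one n with h2 | h2
    · have h3 : (n + 1) % 2 = 1 := by omega
      simp [h2, h3]
    · have h3 : (n + 1) % 2 = 0 := by omega
      simp [h2, h3]

lemma alt_parity_iff {α : Type*} (ε : α → Bool) (l : List α)
    (h : l.Chain' (fun a b => ε a ≠ ε b)) (i j : Fin l.length) :
    (ε (l.get i) = ε (l.get j) ↔ i.1 % 2 = j.1 % 2) := by
  have hi := alt_parity ε l h i.1 i.2
  have hj := alt_parity ε l h j.1 j.2
  simp only [Fin.eta] at hi hj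
  rw [hi, hj]
  rcases Nat.mod_two_eq_zero_or_one i.1 with h2 | h2 <;>
    rcases Nat.mod_two_eq_zero_or_one j.1 with h3 | h3 <;>
      simp [h2, h3]

lemma count_between {N : ℕ} (C : Finset (Fin N)) (l : List (Fin N))
    (hs : l.Pairwise (· < ·)) (hmem : ∀ x, x ∈ l ↔ x ∈ C)
    (i j : Fin l.length) :
    (C.filter (fun x => l.get i < x ∧ x < l.get j)).card = j.1 - i.1 - 1 := by
  have hm : StrictMono l.get := (List.Pairwise.sortedLT hs).strictMono_get
  have himg : (C.filter (fun x => l.get i < x ∧ x < l.get j)) =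
      Finset.image l.get (Finset.Ioo i j) := by
    ext x
    simp only [Finset.mem_filter, Finset.mem_image, Finset.mem_Ioo]
    constructor
    · rintro ⟨hxC, hx1, hx2⟩
      obtain ⟨k, hk⟩ := List.mem_iff_get.mp ((hmem x).mpr hxC)
      exact ⟨k, ⟨hm.lt_iff_lt.mp (by rw [hk]; exact hx1),
        hm.lt_iff_lt.mp (by rw [hk]; exact hx2)⟩, hk⟩
    · rintro ⟨k, ⟨hk1, hk2⟩, rfl⟩
      exact ⟨(hmem _).mp (l.get_mem _), hm hk1, hm hk2⟩
  rw [himg, Finset.card_image_of_injective _ hm.injective, Fin.card_Ioo]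

/-- If `ε` alternates along the sorted list of `C`, and `a < b` in `C` have an even
number of elements of `C` strictly between them, then `ε a ≠ ε b`. -/
lemma eps_ne_of_even_between {N : ℕ} (ε : Fin N → Bool) (C : Finset (Fin N))
    (l : List (Fin N)) (hs : l.Pairwise (· < ·)) (hmem : ∀ x, x ∈ l ↔ x ∈ C)
    (hC : l.Chain' (fun a b => ε a ≠ ε b))
    (a b : Fin N) (ha : a ∈ C) (hb : b ∈ C) (hab : a < b)
    (heven : Even ((C.filter (fun x => a < x ∧ x < b)).card)) :
    ε a ≠ ε b := by
  obtain ⟨i, hi⟩ := List.mem_iff_get.mp ((hmem a).mpr ha)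
  obtain ⟨j, hj⟩ := List.mem_iff_get.mp ((hmem b).mpr hb)
  subst hi; subst hj
  have hij : i < j := ((List.Pairwise.sortedLT hs).strictMono_get).lt_iff_lt.mp hab
  rw [count_between C l hs hmem i j] at heven
  obtain ⟨t, ht⟩ := heven
  intro hEq
  have := (alt_parity_iff ε l hC i j).mp hEq
  have hij' : i.1 < j.1 := hij
  omega

/-- The set of elements of a `π`-block `C` strictly between two `σ`-consecutive
elements of a `σ`-block `B ⊆ C` has even cardinality, when `σ` is non-crossing,
even, and refines `π`. -/
lemma even_between {N : ℕ} (π σ : Finpartition (univ : Finset (Fin N)))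
    (hσNC : NonCrossing σ) (hσE : EvenPartition σ) (hle : Refines σ π)
    (C : Finset (Fin N)) (hC : C ∈ π.parts) (B : Finset (Fin N)) (hB : B ∈ σ.parts)
    (hBC : B ⊆ C) (a b : Fin N) (haB : a ∈ B) (hbB : b ∈ B) (hab : a < b)
    (hgap : ∀ x ∈ B, ¬(a < x ∧ x < b)) :
    Even ((C.filter (fun x => a < x ∧ x < b)).card) := by
  set G := C.filter (fun x => a < x ∧ x < b) with hG
  -- every σ-block meeting G lies in G
  have hblock : ∀ D ∈ σ.parts, ∀ g ∈ D, g ∈ G → D ⊆ G := by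
    intro D hD g hgD hgG
    have hgC : g ∈ C := (Finset.mem_filter.mp hgG).1
    have hgab : a < g ∧ g < b := (Finset.mem_filter.mp hgG).2
    have hDB : D ≠ B := by
      rintro rfl
      exact hgap g hgD hgab
    -- D ⊆ C
    obtain ⟨C', hC', hDC'⟩ := hle D hD
    have hCC' : C' = C := π.eq_of_mem_parts hC' hC (hDC' hgD) hgC
    have hDC : D ⊆ C := hCC' ▸ hDC'
    intro y hyD
    have hyC : y ∈ C := hDC hyD
    have hya : y ≠ a := by
      rintro rfl
      exact hDB (σ.eq_of_mem_parts hD hB hyD haB)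
    have hyb : y ≠ b := by
      rintro rfl
      exact hDB (σ.eq_of_mem_parts hD hB hyD hbB)
    have h1 : a < y := by
      by_contra h
      have hlt : y < a := lt_of_le_of_ne (not_lt.mp h) hya
      obtain ⟨E, hE, hyE, haE⟩ := hσNC y a g b hlt hgab.1 hgab.2
        ⟨D, hD, hyD, hgD⟩ ⟨B, hB, haB, hbB⟩
      have hED : E = D := σ.eq_of_mem_parts hE hD hyE hyD
      exact hDB (σ.eq_of_mem_parts hD hB (hED ▸ haE) haB)
    have h2 : y < b := by
      by_contra h
      have hlt : b < y := lt_of_le_of_ne (not_lt.mp h) (Ne.symm hyb)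
      obtain ⟨E, hE, haE, hgE⟩ := hσNC a g b y hgab.1 hgab.2 hlt
        ⟨B, hB, haB, hbB⟩ ⟨D, hD, hgD, hyD⟩
      have hEB : E = B := σ.eq_of_mem_parts hE hB haE haB
      exact hgap g (hEB ▸ hgE) hgab
    exact Finset.mem_filter.mpr ⟨hyC, h1, h2⟩
  -- G is a disjoint union of σ-blocks
  have hGeq : G = (σ.parts.filter (fun D => D ⊆ G)).biUnion id := by
    apply Finset.Subset.antisymm
    · intro g hg
      obtain ⟨D, hD, hgD⟩ := σ.exists_mem (Finset.mem_univ g)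
      exact Finset.mem_biUnion.mpr ⟨D, Finset.mem_filter.mpr ⟨hD, hblock D hD g hgD hg⟩, hgD⟩
    · intro g hg
      obtain ⟨D, hD, hgD⟩ := Finset.mem_biUnion.mp hg
      exact (Finset.mem_filter.mp hD).2 hgD
  rw [hGeq, Finset.card_biUnion (fun D hD E hE hne =>
    σ.disjoint (Finset.mem_filter.mp hD).1 (Finset.mem_filter.mp hE).1 hne)]
  exact Finset.even_sum _ (fun D hD => hσE D (Finset.mem_filter.mp hD).1)

end Aux

/-- first assertion of Lemma 3.6 of the paper: if `π` is a
non-crossing `ε_d`-partition of `[2dm]` and `σ` is a non-crossing partition with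
`σ ≤ π`, then `σ` is an `ε_d`-partition iff `σ` is even. -/
theorem epsPartition_iff_even_of_refines (d m : ℕ) (hd : 1 ≤ d) (hm : 1 ≤ m)
    (π σ : Finpartition (univ : Finset (Fin (2*d*m))))
    (hπNC : NonCrossing π) (hπ : EpsPartition (epsd d m) π)
    (hσNC : NonCrossing σ) (hle : Refines σ π) :
    EpsPartition (epsd d m) σ ↔ EvenPartition σ := by
  constructor
  · exact fun h => h.1
  · intro hσE
    refine ⟨hσE, ?_⟩
    intro B hB
    obtain ⟨C, hC, hBC⟩ := hle B hB
    have hchain : (Finset.sort C (· ≤ ·)).Chain' (fun a b => epsd d m a ≠ epsd d m b) :=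
      hπ.2 C hC
    refine List.isChain_iff_getElem.mpr ?_
    intro i hi
    have hi1 : i < (Finset.sort B (· ≤ ·)).length := by omega
    have hi2 : i + 1 < (Finset.sort B (· ≤ ·)).length := by omega
    set lB := Finset.sort B (· ≤ ·) with hlB
    set a := lB.get ⟨i, hi1⟩ with hadef
    set b := lB.get ⟨i + 1, hi2⟩ with hbdef
    have hsB : lB.Pairwise (· < ·) := (Finset.sortedLT_sort B).pairwise
    have hmB : StrictMono lB.get := (List.Pairwise.sortedLT hsB).strictMono_get
    have haB : a ∈ B := (Finset.mem_sort _).mp (lB.get_mem _)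
    have hbB : b ∈ B := (Finset.mem_sort _).mp (lB.get_mem _)
    have hab : a < b := hmB (by exact Fin.mk_lt_mk.mpr (Nat.lt_succ_self i))
    have hgap : ∀ x ∈ B, ¬(a < x ∧ x < b) := by
      intro x hxB ⟨hx1, hx2⟩
      obtain ⟨k, hk⟩ := List.mem_iff_get.mp ((Finset.mem_sort (α := Fin (2*d*m)) (· ≤ ·)).mpr hxB)
      rw [← hk] at hx1 hx2
      have h1 : (⟨i, hi1⟩ : Fin lB.length) < k := hmB.lt_iff_lt.mp hx1
      have h2 : k < (⟨i + 1, hi2⟩ : Fin lB.length) := hmB.lt_iff_lt.mp hx2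
      have h1' : i < k.1 := h1
      have h2' : k.1 < i + 1 := h2
      omega
    exact eps_ne_of_even_between (epsd d m) C (Finset.sort C (· ≤ ·))
      (Finset.sortedLT_sort C).pairwise (fun x => Finset.mem_sort _) hchain
      a b (hBC haB) (hBC hbB) hab
      (even_between π σ hσNC hσE hle C hC B hB hBC a b haB hbB hab hgap)
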